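/- In the capacitated b-matching setting, let M be a welfare-maximizing allocation. Then there exists an allocation M^{-1} that maximizes v among allocations whose row 1 is identically zero and such that the vertex of agent 1 is the unique possible source in the difference graph: for every agent i ≠ 1, Σ_j M i j ≤ Σ_j M^{-1} i j, and for every good j, Σ_i M^{-1} i j ≤ Σ_i M i j. -/

import Mathlib

/-- An allocation in the capacitated `b`-matching setting: agent `i` gets at
most `c i` units in total and at most `q j` units of good `j` are allocated. -/
def IsAlloc {n m : ℕ} (c : Fin n → ℕ) (q : Fin m → ℕ)
    (a : Fin n → Fin m → ℕ) : Prop :=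
  (∀ i, ∑ j, a i j ≤ c i) ∧ (∀ j, ∑ i, a i j ≤ q j)

/-- The value of an allocation: `∑_{i,j} a i j · w i j`. -/
def allocVal {n m : ℕ} (w : Fin n → Fin m → ℝ) (a : Fin n → Fin m → ℕ) : ℝ :=
  ∑ i, ∑ j, (a i j : ℝ) * w i j

namespace ExcOpt

variable {n m : ℕ}

def Sgl (i : Fin n) (j : Fin m) (v : ℤ) : Fin n → Fin m → ℤ :=
  fun i' j' => if i' = i ∧ j' = j then v else 0

def RowS (d : Fin n → Fin m → ℤ) (i : Fin n) : ℤ := ∑ j, d i j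
def ColS (d : Fin n → Fin m → ℤ) (j : Fin m) : ℤ := ∑ i, d i j

lemma add_apply' (d e : Fin n → Fin m → ℤ) (i j) : (d + e) i j = d i j + e i j := rfl

lemma sgl_apply (i : Fin n) (j : Fin m) (v : ℤ) (i' j') :
    Sgl i j v i' j' = if i' = i ∧ j' = j then v else 0 := rfl

lemma rowS_sgl (i : Fin n) (j : Fin m) (v : ℤ) (i') :
    RowS (Sgl i j v) i' = if i' = i then v else 0 := by
  unfold RowS Sgl
  by_cases h : i' = i
  · subst h; simp
  · simp [h]

lemma colS_sgl (i : Fin n) (j : Fin m) (v : ℤ) (j') :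
    ColS (Sgl i j v) j' = if j' = j then v else 0 := by
  unfold ColS Sgl
  by_cases h : j' = j
  · subst h; simp
  · simp [h]

lemma rowS_add (d e : Fin n → Fin m → ℤ) (i) : RowS (d + e) i = RowS d i + RowS e i := by
  unfold RowS; simp [add_apply', Finset.sum_add_distrib]

lemma colS_add (d e : Fin n → Fin m → ℤ) (j) : ColS (d + e) j = ColS d j + ColS e j := by
  unfold ColS; simp [add_apply', Finset.sum_add_distrib]

lemma rowS_zero_of (d : Fin n → Fin m → ℤ) (i) (h : ∀ j, d i j = 0) : RowS d i = 0 :=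
  Finset.sum_eq_zero fun j _ => h j

lemma colS_zero_of (d : Fin n → Fin m → ℤ) (j) (h : ∀ i, d i j = 0) : ColS d j = 0 :=
  Finset.sum_eq_zero fun i _ => h i

def Base (a M : Fin n → Fin m → ℕ) (i₀ : Fin n) (d : Fin n → Fin m → ℤ) : Prop :=
  (∀ i j, d i j = 0 ∨ (d i j = 1 ∧ a i j < M i j) ∨ (d i j = -1 ∧ M i j < a i j)) ∧
  (∀ j, d i₀ j = 0)

lemma Base.add_sgl {a M : Fin n → Fin m → ℕ} {i₀ : Fin n} {d : Fin n → Fin m → ℤ}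
    {i : Fin n} {j : Fin m} {v : ℤ}
    (hB : Base a M i₀ d) (h0 : d i j = 0) (hne : i ≠ i₀)
    (hv : (v = 1 ∧ a i j < M i j) ∨ (v = -1 ∧ M i j < a i j)) :
    Base a M i₀ (d + Sgl i j v) := by
  constructor
  · intro i' j'
    by_cases h : i' = i ∧ j' = j
    · obtain ⟨h1, h2⟩ := h; subst h1; subst h2
      rw [add_apply', h0, sgl_apply]
      simp only [and_self, if_true, zero_add]
      rcases hv with ⟨rfl, hlt⟩ | ⟨rfl, hlt⟩
      · exact Or.inr (Or.inl ⟨rfl, hlt⟩)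
      · exact Or.inr (Or.inr ⟨rfl, hlt⟩)
    · rw [add_apply', sgl_apply, if_neg h, add_zero]
      exact hB.1 i' j'
  · intro j'
    rw [add_apply', sgl_apply, hB.2 j', if_neg, add_zero]
    rintro ⟨h1, -⟩; exact hne h1.symm

lemma Base.sgl {a M : Fin n → Fin m → ℕ} {i₀ : Fin n} {i : Fin n} {j : Fin m} {v : ℤ}
    (hne : i ≠ i₀)
    (hv : (v = 1 ∧ a i j < M i j) ∨ (v = -1 ∧ M i j < a i j)) :
    Base a M i₀ (Sgl i j v) := by
  have h0 : Base a M i₀ (0 : Fin n → Fin m → ℤ) := ⟨fun _ _ => Or.inl rfl, fun _ => rfl⟩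
  have := h0.add_sgl rfl hne hv
  simpa using this

def FinP (c : Fin n → ℕ) (q : Fin m → ℕ) (a M : Fin n → Fin m → ℕ) (i₀ : Fin n)
    (d : Fin n → Fin m → ℤ) : Prop :=
  Base a M i₀ d ∧ d ≠ 0 ∧
  (∀ i, (∑ j, (a i j : ℤ)) + RowS d i ≤ c i) ∧
  (∀ j, (∑ i, (a i j : ℤ)) + ColS d j ≤ q j) ∧
  (∀ i, (∑ j, (M i j : ℤ)) - RowS d i ≤ c i) ∧
  (∀ j, (∑ i, (M i j : ℤ)) - ColS d j ≤ q j)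

def PendP (c : Fin n → ℕ) (q : Fin m → ℕ) (a M : Fin n → Fin m → ℕ) (i₀ : Fin n)
    (V : Finset (Fin n)) (W : Finset (Fin m)) (i : Fin n) (d : Fin n → Fin m → ℤ) : Prop :=
  Base a M i₀ d ∧ RowS d i = 1 ∧
  (∀ i', i' ≠ i → RowS d i' ≤ 0 ∧ (∑ j, (M i' j : ℤ)) - RowS d i' ≤ c i') ∧
  (∀ j, 0 ≤ ColS d j ∧ (∑ i', (a i' j : ℤ)) + ColS d j ≤ q j) ∧
  (∀ i' ∈ V, ∀ j, d i' j = 0) ∧ (∀ j ∈ W, ∀ i', d i' j = 0)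

def CycAP (a M : Fin n → Fin m → ℕ) (i₀ : Fin n)
    (V : Finset (Fin n)) (W : Finset (Fin m)) (i v : Fin n) (d : Fin n → Fin m → ℤ) : Prop :=
  Base a M i₀ d ∧ RowS d i = 1 ∧ RowS d v = -1 ∧
  (∀ i', i' ≠ i → i' ≠ v → RowS d i' = 0) ∧
  (∀ j, ColS d j = 0) ∧
  (∀ i' ∈ V, i' ≠ v → ∀ j, d i' j = 0) ∧ (∀ j ∈ W, ∀ i', d i' j = 0)

def CycGP (a M : Fin n → Fin m → ℕ) (i₀ : Fin n)
    (V : Finset (Fin n)) (W : Finset (Fin m)) (i : Fin n) (u : Fin m)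
    (d : Fin n → Fin m → ℤ) : Prop :=
  Base a M i₀ d ∧ RowS d i = 1 ∧ (∀ i', i' ≠ i → RowS d i' = 0) ∧
  ColS d u = 1 ∧ (∀ j, j ≠ u → ColS d j = 0) ∧
  (∀ i' ∈ V, ∀ j, d i' j = 0) ∧ (∀ j ∈ W, j ≠ u → ∀ i', d i' j = 0) ∧
  (∀ i', 0 ≤ d i' u)

def Outc (c : Fin n → ℕ) (q : Fin m → ℕ) (a M : Fin n → Fin m → ℕ) (i₀ : Fin n)
    (V : Finset (Fin n)) (W : Finset (Fin m)) (i : Fin n) : Prop :=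
  (∃ d, FinP c q a M i₀ d) ∨ (∃ d, PendP c q a M i₀ V W i d) ∨
  (∃ v ∈ V, ∃ d, CycAP a M i₀ V W i v d) ∨ (∃ u ∈ W, ∃ d, CycGP a M i₀ V W i u d)

lemma cast_row (x : Fin n → Fin m → ℕ) (i : Fin n) :
    (∑ j, (x i j : ℤ)) = ((∑ j, x i j : ℕ) : ℤ) := by push_cast; ring

lemma cast_col (x : Fin n → Fin m → ℕ) (j : Fin m) :
    (∑ i, (x i j : ℤ)) = ((∑ i, x i j : ℕ) : ℤ) := by push_cast; ring

theorem walk (c : Fin n → ℕ) (q : Fin m → ℕ) (a M : Fin n → Fin m → ℕ) (i₀ : Fin n)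
    (ha : IsAlloc c q a) (haz : ∀ j, a i₀ j = 0) (hM : IsAlloc c q M) :
    ∀ fuel : ℕ, ∀ V : Finset (Fin n), ∀ W : Finset (Fin m), ∀ i : Fin n,
      (Finset.univ \ V).card ≤ fuel → i ∉ V → i ≠ i₀ → (∃ j, a i j < M i j) →
      Outc c q a M i₀ V W i := by
  have ha1 : ∀ i', (∑ j', (a i' j' : ℤ)) ≤ c i' := by
    intro i'; rw [cast_row]; exact_mod_cast ha.1 i'
  have ha2 : ∀ j', (∑ i', (a i' j' : ℤ)) ≤ q j' := by
    intro j'; rw [cast_col]; exact_mod_cast ha.2 j'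
  have hM1 : ∀ i', (∑ j', (M i' j' : ℤ)) ≤ c i' := by
    intro i'; rw [cast_row]; exact_mod_cast hM.1 i'
  have hM2 : ∀ j', (∑ i', (M i' j' : ℤ)) ≤ q j' := by
    intro j'; rw [cast_col]; exact_mod_cast hM.2 j'
  intro fuel
  induction fuel with
  | zero =>
    intro V W i hcard hiV _ _
    exfalso
    have hmem : i ∈ Finset.univ \ V := Finset.mem_sdiff.mpr ⟨Finset.mem_univ i, hiV⟩
    have := Finset.card_pos.mpr ⟨i, hmem⟩
    omega
  | succ k IH =>
    intro V W i hcard hiV hii0 hex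
    obtain ⟨j, hj⟩ := hex
    by_cases hjW : j ∈ W
    · -- a cycle closes at good j (which is upstream): CYCG generator
      refine Or.inr (Or.inr (Or.inr ⟨j, hjW, Sgl i j 1,
        Base.sgl hii0 (Or.inl ⟨rfl, hj⟩), ?_, ?_, ?_, ?_, ?_, ?_, ?_⟩))
      · rw [rowS_sgl, if_pos rfl]
      · intro i' hi'; rw [rowS_sgl, if_neg hi']
      · rw [colS_sgl, if_pos rfl]
      · intro j' hj'; rw [colS_sgl, if_neg hj']
      · intro i' hi'V j'
        rw [sgl_apply, if_neg]
        rintro ⟨h, -⟩; exact hiV (h ▸ hi'V)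
      · intro j' _ hj' i'
        rw [sgl_apply, if_neg]
        rintro ⟨-, h⟩; exact hj' h
      · intro i'; rw [sgl_apply]; split_ifs <;> norm_num
    · by_cases hcap : ∑ i', a i' j < q j
      · -- free capacity at good j: the walk ends here (PEND)
        refine Or.inr (Or.inl ⟨Sgl i j 1,
          Base.sgl hii0 (Or.inl ⟨rfl, hj⟩), ?_, ?_, ?_, ?_, ?_⟩)
        · rw [rowS_sgl, if_pos rfl]
        · intro i' hi'
          rw [rowS_sgl, if_neg hi']
          refine ⟨le_refl 0, ?_⟩
          have := hM1 i'; omega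
        · intro j'
          rw [colS_sgl]
          by_cases h : j' = j
          · subst h
            rw [if_pos rfl]
            have hq : (∑ i', (a i' j' : ℤ)) + 1 ≤ q j' := by
              rw [cast_col]; exact_mod_cast hcap
            exact ⟨by norm_num, hq⟩
          · rw [if_neg h]
            have := ha2 j'; exact ⟨le_refl 0, by omega⟩
        · intro i' hi'V j'
          rw [sgl_apply, if_neg]
          rintro ⟨h, -⟩; exact hiV (h ▸ hi'V)
        · intro j' hj'W i'
          rw [sgl_apply, if_neg]
          rintro ⟨-, h⟩; exact hjW (h ▸ hj'W)
      · -- good j is saturated in a; find i'' with M i'' j < a i'' j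
        have hqe : ∑ i', a i' j = q j := le_antisymm (ha.2 j) (Nat.le_of_not_lt hcap)
        have hseA := Finset.sum_erase_add Finset.univ (fun i' => a i' j) (Finset.mem_univ i)
        have hseM := Finset.sum_erase_add Finset.univ (fun i' => M i' j) (Finset.mem_univ i)
        have hsum : ∑ i' ∈ Finset.univ.erase i, M i' j < ∑ i' ∈ Finset.univ.erase i, a i' j := by
          have := hM.2 j
          omega
        obtain ⟨i'', hi''mem, hlt''⟩ := Finset.exists_lt_of_sum_lt hsum
        have hi''ne : i'' ≠ i := Finset.ne_of_mem_erase hi''mem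
        have hine'' : i ≠ i'' := Ne.symm hi''ne
        have hi''0 : i'' ≠ i₀ := by
          intro h; rw [h] at hlt''; have := haz j; omega
        have hBgen : Base a M i₀ (Sgl i j 1 + Sgl i'' j (-1)) := by
          refine (Base.sgl hii0 (Or.inl ⟨rfl, hj⟩)).add_sgl ?_ hi''0 (Or.inr ⟨rfl, hlt''⟩)
          rw [sgl_apply, if_neg]; rintro ⟨h, -⟩; exact hi''ne h
        by_cases hVmem : i'' ∈ V
        · -- cycle closes at agent i'' upstream: CYCA generator
          refine Or.inr (Or.inr (Or.inl ⟨i'', hVmem, Sgl i j 1 + Sgl i'' j (-1),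
            hBgen, ?_, ?_, ?_, ?_, ?_, ?_⟩))
          · rw [rowS_add, rowS_sgl, rowS_sgl, if_pos rfl, if_neg hine'']; norm_num
          · rw [rowS_add, rowS_sgl, rowS_sgl, if_neg hi''ne, if_pos rfl]; norm_num
          · intro i' h1 h2
            rw [rowS_add, rowS_sgl, rowS_sgl, if_neg h1, if_neg h2]; norm_num
          · intro j'
            rw [colS_add, colS_sgl, colS_sgl]
            split_ifs <;> norm_num
          · intro i' hi'V hne j'
            rw [add_apply', sgl_apply, sgl_apply, if_neg, if_neg]
            · norm_num
            · rintro ⟨h, -⟩; exact hne h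
            · rintro ⟨h, -⟩; exact hiV (h ▸ hi'V)
          · intro j' hj'W i'
            rw [add_apply', sgl_apply, sgl_apply, if_neg, if_neg]
            · norm_num
            · rintro ⟨-, h⟩; exact hjW (h ▸ hj'W)
            · rintro ⟨-, h⟩; exact hjW (h ▸ hj'W)
        · by_cases hMr : ∑ j', M i'' j' < c i''
          · -- the walk ends at agent i'' (type A end): PEND
            refine Or.inr (Or.inl ⟨Sgl i j 1 + Sgl i'' j (-1),
              hBgen, ?_, ?_, ?_, ?_, ?_⟩)
            · rw [rowS_add, rowS_sgl, rowS_sgl, if_pos rfl, if_neg hine'']; norm_num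
            · intro i' hi'
              rw [rowS_add, rowS_sgl, rowS_sgl, if_neg hi']
              by_cases h : i' = i''
              · subst h
                rw [if_pos rfl]
                have : (∑ j', (M i' j' : ℤ)) + 1 ≤ c i' := by
                  rw [cast_row]; exact_mod_cast hMr
                exact ⟨by norm_num, by omega⟩
              · rw [if_neg h]
                have := hM1 i'; exact ⟨le_refl 0, by omega⟩
            · intro j'
              rw [colS_add, colS_sgl, colS_sgl]
              have := ha2 j'
              split_ifs <;> constructor <;> omega
            · intro i' hi'V j'
              rw [add_apply', sgl_apply, sgl_apply, if_neg, if_neg]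
              · norm_num
              · rintro ⟨h, -⟩; exact hVmem (h ▸ hi'V)
              · rintro ⟨h, -⟩; exact hiV (h ▸ hi'V)
            · intro j' hj'W i'
              rw [add_apply', sgl_apply, sgl_apply, if_neg, if_neg]
              · norm_num
              · rintro ⟨-, h⟩; exact hjW (h ▸ hj'W)
              · rintro ⟨-, h⟩; exact hjW (h ▸ hj'W)
          · -- recurse deeper from agent i''
            have hMre : c i'' ≤ ∑ j', M i'' j' := Nat.le_of_not_lt hMr
            have hex'' : ∃ j', a i'' j' < M i'' j' := by
              have h1 := Finset.sum_erase_add Finset.univ (fun j' => a i'' j') (Finset.mem_univ j)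
              have h2 := Finset.sum_erase_add Finset.univ (fun j' => M i'' j') (Finset.mem_univ j)
              have h3 : ∑ j', a i'' j' ≤ c i'' := ha.1 i''
              have hs : ∑ j' ∈ Finset.univ.erase j, a i'' j' <
                  ∑ j' ∈ Finset.univ.erase j, M i'' j' := by
                omega
              obtain ⟨j', _, h⟩ := Finset.exists_lt_of_sum_lt hs
              exact ⟨j', h⟩
            have hcard' : (Finset.univ \ insert i V).card ≤ k := by
              have he : Finset.univ \ insert i V = (Finset.univ \ V).erase i := by
                ext x
                simp only [Finset.mem_sdiff, Finset.mem_erase, Finset.mem_insert,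
                  Finset.mem_univ, true_and]
                tauto
              rw [he, Finset.card_erase_of_mem
                (Finset.mem_sdiff.mpr ⟨Finset.mem_univ i, hiV⟩)]
              omega
            have hi''notV' : i'' ∉ insert i V := by
              simp [Finset.mem_insert, hi''ne, hVmem]
            have hout := IH (insert i V) (insert j W) i'' hcard' hi''notV' hi''0 hex''
            rcases hout with ⟨d, hF⟩ | ⟨d, hP⟩ | ⟨v, hvV, d, hCA⟩ | ⟨u, huW, d, hCG⟩
            · exact Or.inl ⟨d, hF⟩
            · -- PEND pass-up
              obtain ⟨hB, hri, hrow, hcol, hVz, hWz⟩ := hP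
              have hdij : d i j = 0 := hVz i (Finset.mem_insert_self i V) j
              have hdi''j : d i'' j = 0 := hWz j (Finset.mem_insert_self j W) i''
              have hrowi : RowS d i = 0 := rowS_zero_of d i (hVz i (Finset.mem_insert_self i V))
              have hcolj : ColS d j = 0 := colS_zero_of d j (hWz j (Finset.mem_insert_self j W))
              have hBnew : Base a M i₀ (d + Sgl i j 1 + Sgl i'' j (-1)) := by
                refine (hB.add_sgl hdij hii0 (Or.inl ⟨rfl, hj⟩)).add_sgl ?_ hi''0
                  (Or.inr ⟨rfl, hlt''⟩)
                rw [add_apply', sgl_apply, if_neg (fun h => hi''ne h.1), hdi''j]; norm_num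
              refine Or.inr (Or.inl ⟨d + Sgl i j 1 + Sgl i'' j (-1),
                hBnew, ?_, ?_, ?_, ?_, ?_⟩)
              · rw [rowS_add, rowS_add, rowS_sgl, rowS_sgl, hrowi,
                  if_pos rfl, if_neg hine'']; norm_num
              · intro i' hi'
                rw [rowS_add, rowS_add, rowS_sgl, rowS_sgl, if_neg hi']
                by_cases h : i' = i''
                · subst h
                  rw [if_pos rfl, hri]
                  have := hM1 i'
                  exact ⟨by norm_num, by omega⟩
                · rw [if_neg h]
                  have := hrow i' h
                  exact ⟨by omega, by omega⟩
              · intro j'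
                rw [colS_add, colS_add, colS_sgl, colS_sgl]
                by_cases h : j' = j
                · subst h
                  rw [if_pos rfl, if_pos rfl, hcolj]
                  have := ha2 j'
                  exact ⟨by norm_num, by omega⟩
                · rw [if_neg h, if_neg h]
                  have := hcol j'
                  exact ⟨by omega, by omega⟩
              · intro i' hi'V j'
                rw [add_apply', add_apply', sgl_apply, sgl_apply, if_neg, if_neg,
                  hVz i' (Finset.mem_insert_of_mem hi'V) j']
                · norm_num
                · rintro ⟨h, -⟩; exact hVmem (h ▸ hi'V)
                · rintro ⟨h, -⟩; exact hiV (h ▸ hi'V)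
              · intro j' hj'W i'
                rw [add_apply', add_apply', sgl_apply, sgl_apply, if_neg, if_neg,
                  hWz j' (Finset.mem_insert_of_mem hj'W) i']
                · norm_num
                · rintro ⟨-, h⟩; exact hjW (h ▸ hj'W)
                · rintro ⟨-, h⟩; exact hjW (h ▸ hj'W)
            · -- CYCA pass-up or close
              obtain ⟨hB, hri, hrv, hrow, hcol, hVz, hWz⟩ := hCA
              have hdi''j : d i'' j = 0 := hWz j (Finset.mem_insert_self j W) i''
              have hdij : d i j = 0 := hWz j (Finset.mem_insert_self j W) i
              have hBnew : Base a M i₀ (d + Sgl i j 1 + Sgl i'' j (-1)) := by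
                refine (hB.add_sgl hdij hii0 (Or.inl ⟨rfl, hj⟩)).add_sgl ?_ hi''0
                  (Or.inr ⟨rfl, hlt''⟩)
                rw [add_apply', sgl_apply, if_neg (fun h => hi''ne h.1), hdi''j]; norm_num
              by_cases hvi : v = i
              · -- the cycle closes here: FIN
                subst hvi
                have hR : ∀ ii, RowS (d + Sgl v j 1 + Sgl i'' j (-1)) ii = 0 := by
                  intro ii
                  rw [rowS_add, rowS_add, rowS_sgl, rowS_sgl]
                  by_cases h1 : ii = v
                  · subst h1; rw [if_pos rfl, if_neg hine'', hrv]; ring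
                  · by_cases h2 : ii = i''
                    · subst h2; rw [if_neg hi''ne, if_pos rfl, hri]; ring
                    · rw [if_neg h1, if_neg h2, hrow ii h2 h1]; ring
                have hC : ∀ jj, ColS (d + Sgl v j 1 + Sgl i'' j (-1)) jj = 0 := by
                  intro jj
                  rw [colS_add, colS_add, colS_sgl, colS_sgl, hcol jj]
                  split_ifs <;> ring
                have hne0 : ∃ js, d i'' js ≠ 0 := by
                  by_contra hC'
                  push_neg at hC'
                  rw [rowS_zero_of d i'' hC'] at hri
                  norm_num at hri
                obtain ⟨js, hjs⟩ := hne0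
                have hjsj : js ≠ j := fun h => hjs (h ▸ hdi''j)
                refine Or.inl ⟨d + Sgl v j 1 + Sgl i'' j (-1), hBnew, ?_, ?_, ?_, ?_, ?_⟩
                · intro h0
                  apply hjs
                  have heq : (d + Sgl v j 1 + Sgl i'' j (-1)) i'' js = d i'' js := by
                    rw [add_apply', add_apply', sgl_apply, sgl_apply, if_neg, if_neg]
                    · norm_num
                    · rintro ⟨-, h⟩; exact hjsj h
                    · rintro ⟨-, h⟩; exact hjsj h
                  rw [h0] at heq
                  exact heq.symm
                · intro ii; rw [hR]; have := ha1 ii; omega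
                · intro jj; rw [hC]; have := ha2 jj; omega
                · intro ii; rw [hR]; have := hM1 ii; omega
                · intro jj; rw [hC]; have := hM2 jj; omega
              · -- pass up
                have hvV' : v ∈ V := by
                  rcases Finset.mem_insert.mp hvV with h | h
                  · exact absurd h hvi
                  · exact h
                have hvne'' : v ≠ i'' := fun h => hVmem (h ▸ hvV')
                have hinv : i ≠ v := fun h => hvi h.symm
                have hrowi : RowS d i = 0 :=
                  rowS_zero_of d i (hVz i (Finset.mem_insert_self i V) hinv)
                refine Or.inr (Or.inr (Or.inl ⟨v, hvV', d + Sgl i j 1 + Sgl i'' j (-1),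
                  hBnew, ?_, ?_, ?_, ?_, ?_, ?_⟩))
                · rw [rowS_add, rowS_add, rowS_sgl, rowS_sgl, hrowi,
                    if_pos rfl, if_neg hine'']; norm_num
                · rw [rowS_add, rowS_add, rowS_sgl, rowS_sgl, if_neg hinv.symm,
                    if_neg hvne'', hrv]; ring
                · intro i' h1 h2
                  rw [rowS_add, rowS_add, rowS_sgl, rowS_sgl, if_neg h1]
                  by_cases h : i' = i''
                  · subst h; rw [if_pos rfl, hri]; ring
                  · rw [if_neg h, hrow i' h h2]; ring
                · intro jj
                  rw [colS_add, colS_add, colS_sgl, colS_sgl, hcol jj]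
                  split_ifs <;> ring
                · intro i' hi'V hne j'
                  rw [add_apply', add_apply', sgl_apply, sgl_apply, if_neg, if_neg,
                    hVz i' (Finset.mem_insert_of_mem hi'V) hne j']
                  · norm_num
                  · rintro ⟨h, -⟩; exact hVmem (h ▸ hi'V)
                  · rintro ⟨h, -⟩; exact hiV (h ▸ hi'V)
                · intro j' hj'W i'
                  rw [add_apply', add_apply', sgl_apply, sgl_apply, if_neg, if_neg,
                    hWz j' (Finset.mem_insert_of_mem hj'W) i']
                  · norm_num
                  · rintro ⟨-, h⟩; exact hjW (h ▸ hj'W)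
                  · rintro ⟨-, h⟩; exact hjW (h ▸ hj'W)
            · -- CYCG pass-up or close
              obtain ⟨hB, hri, hrow, hcu, hcol, hVz, hWz, hnn⟩ := hCG
              by_cases huj : u = j
              · -- the cycle closes here at good j: FIN, apply only the minus edge
                subst huj
                have hdi''u : d i'' u = 0 := by
                  rcases hB.1 i'' u with h | ⟨h, hlt⟩ | ⟨h, hlt⟩
                  · exact h
                  · omega
                  · have := hnn i''; omega
                have hBnew : Base a M i₀ (d + Sgl i'' u (-1)) :=
                  hB.add_sgl hdi''u hi''0 (Or.inr ⟨rfl, hlt''⟩)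
                have hR : ∀ ii, RowS (d + Sgl i'' u (-1)) ii = 0 := by
                  intro ii
                  rw [rowS_add, rowS_sgl]
                  by_cases h : ii = i''
                  · subst h; rw [if_pos rfl, hri]; ring
                  · rw [if_neg h, hrow ii h]; ring
                have hC : ∀ jj, ColS (d + Sgl i'' u (-1)) jj = 0 := by
                  intro jj
                  rw [colS_add, colS_sgl]
                  by_cases h : jj = u
                  · subst h; rw [if_pos rfl, hcu]; ring
                  · rw [if_neg h, hcol jj h]; ring
                have hne0 : ∃ is, d is u ≠ 0 := by
                  by_contra hC'
                  push_neg at hC'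
                  rw [colS_zero_of d u hC'] at hcu
                  norm_num at hcu
                obtain ⟨is, his⟩ := hne0
                have hisne : is ≠ i'' := fun h => his (h ▸ hdi''u)
                refine Or.inl ⟨d + Sgl i'' u (-1), hBnew, ?_, ?_, ?_, ?_, ?_⟩
                · intro h0
                  apply his
                  have heq : (d + Sgl i'' u (-1)) is u = d is u := by
                    rw [add_apply', sgl_apply, if_neg]
                    · norm_num
                    · rintro ⟨h, -⟩; exact hisne h
                  rw [h0] at heq
                  exact heq.symm
                · intro ii; rw [hR]; have := ha1 ii; omega
                · intro jj; rw [hC]; have := ha2 jj; omega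
                · intro ii; rw [hR]; have := hM1 ii; omega
                · intro jj; rw [hC]; have := hM2 jj; omega
              · -- pass up
                have huW' : u ∈ W := by
                  rcases Finset.mem_insert.mp huW with h | h
                  · exact absurd h huj
                  · exact h
                have hjnu : j ≠ u := fun h => huj h.symm
                have hdij : d i j = 0 := hVz i (Finset.mem_insert_self i V) j
                have hdi''j : d i'' j = 0 := hWz j (Finset.mem_insert_self j W) hjnu i''
                have hrowi : RowS d i = 0 :=
                  rowS_zero_of d i (hVz i (Finset.mem_insert_self i V))
                have hcolj : ColS d j = 0 :=
                  colS_zero_of d j (hWz j (Finset.mem_insert_self j W) hjnu)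
                have hBnew : Base a M i₀ (d + Sgl i j 1 + Sgl i'' j (-1)) := by
                  refine (hB.add_sgl hdij hii0 (Or.inl ⟨rfl, hj⟩)).add_sgl ?_ hi''0
                    (Or.inr ⟨rfl, hlt''⟩)
                  rw [add_apply', sgl_apply, if_neg (fun h => hi''ne h.1), hdi''j]; norm_num
                refine Or.inr (Or.inr (Or.inr ⟨u, huW', d + Sgl i j 1 + Sgl i'' j (-1),
                  hBnew, ?_, ?_, ?_, ?_, ?_, ?_, ?_⟩))
                · rw [rowS_add, rowS_add, rowS_sgl, rowS_sgl, hrowi,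
                    if_pos rfl, if_neg hine'']; norm_num
                · intro i' hi'
                  rw [rowS_add, rowS_add, rowS_sgl, rowS_sgl, if_neg hi']
                  by_cases h : i' = i''
                  · subst h; rw [if_pos rfl, hri]; ring
                  · rw [if_neg h, hrow i' h]; ring
                · rw [colS_add, colS_add, colS_sgl, colS_sgl, if_neg (Ne.symm hjnu),
                    if_neg (Ne.symm hjnu), hcu]; ring
                · intro jj hjj
                  rw [colS_add, colS_add, colS_sgl, colS_sgl]
                  by_cases h : jj = j
                  · subst h; rw [if_pos rfl, if_pos rfl, hcolj]; ring
                  · rw [if_neg h, if_neg h, hcol jj hjj]; ring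
                · intro i' hi'V j'
                  rw [add_apply', add_apply', sgl_apply, sgl_apply, if_neg, if_neg,
                    hVz i' (Finset.mem_insert_of_mem hi'V) j']
                  · norm_num
                  · rintro ⟨h, -⟩; exact hVmem (h ▸ hi'V)
                  · rintro ⟨h, -⟩; exact hiV (h ▸ hi'V)
                · intro j' hj'W hj'u i'
                  rw [add_apply', add_apply', sgl_apply, sgl_apply, if_neg, if_neg,
                    hWz j' (Finset.mem_insert_of_mem hj'W) hj'u i']
                  · norm_num
                  · rintro ⟨-, h⟩; exact hjW (h ▸ hj'W)
                  · rintro ⟨-, h⟩; exact hjW (h ▸ hj'W)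
                · intro i'
                  have heq : (d + Sgl i j 1 + Sgl i'' j (-1)) i' u = d i' u := by
                    rw [add_apply', add_apply', sgl_apply, sgl_apply, if_neg, if_neg]
                    · norm_num
                    · rintro ⟨-, h⟩; exact hjnu h.symm
                    · rintro ⟨-, h⟩; exact hjnu h.symm
                  rw [heq]; exact hnn i'

def Dist (M x : Fin n → Fin m → ℕ) : ℕ := ∑ i, ∑ j, Nat.dist (x i j) (M i j)

lemma no_finp (c : Fin n → ℕ) (q : Fin m → ℕ) (w : Fin n → Fin m → ℝ)
    (a M : Fin n → Fin m → ℕ) (i₀ : Fin n)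
    (hMmax : ∀ x, IsAlloc c q x → allocVal w x ≤ allocVal w M)
    (haopt : ∀ x, IsAlloc c q x → (∀ j, x i₀ j = 0) → allocVal w x ≤ allocVal w a)
    (hamin : ∀ x, IsAlloc c q x → (∀ j, x i₀ j = 0) →
      allocVal w x = allocVal w a → Dist M a ≤ Dist M x)
    (haz : ∀ j, a i₀ j = 0)
    (d : Fin n → Fin m → ℤ) (hF : FinP c q a M i₀ d) : False := by
  obtain ⟨hB, hd0, hra, hca, hrM, hcM⟩ := hF
  set A : Fin n → Fin m → ℕ := fun i j => ((a i j : ℤ) + d i j).toNat with hAdef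
  set Y : Fin n → Fin m → ℕ := fun i j => ((M i j : ℤ) - d i j).toNat with hYdef
  have hAc : ∀ i j, (A i j : ℤ) = (a i j : ℤ) + d i j := by
    intro i j
    have hnn : (0 : ℤ) ≤ (a i j : ℤ) + d i j := by
      rcases hB.1 i j with h | ⟨h, hlt⟩ | ⟨h, hlt⟩ <;> omega
    simpa [hAdef] using Int.toNat_of_nonneg hnn
  have hYc : ∀ i j, (Y i j : ℤ) = (M i j : ℤ) - d i j := by
    intro i j
    have hnn : (0 : ℤ) ≤ (M i j : ℤ) - d i j := by
      rcases hB.1 i j with h | ⟨h, hlt⟩ | ⟨h, hlt⟩ <;> omega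
    simpa [hYdef] using Int.toNat_of_nonneg hnn
  have hAr : ∀ i, (∑ j, (A i j : ℤ)) = (∑ j, (a i j : ℤ)) + RowS d i := by
    intro i
    unfold RowS
    rw [← Finset.sum_add_distrib]
    exact Finset.sum_congr rfl fun j _ => hAc i j
  have hAcol : ∀ j, (∑ i, (A i j : ℤ)) = (∑ i, (a i j : ℤ)) + ColS d j := by
    intro j
    unfold ColS
    rw [← Finset.sum_add_distrib]
    exact Finset.sum_congr rfl fun i _ => hAc i j
  have hYr : ∀ i, (∑ j, (Y i j : ℤ)) = (∑ j, (M i j : ℤ)) - RowS d i := by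
    intro i
    unfold RowS
    rw [← Finset.sum_sub_distrib]
    exact Finset.sum_congr rfl fun j _ => hYc i j
  have hYcol : ∀ j, (∑ i, (Y i j : ℤ)) = (∑ i, (M i j : ℤ)) - ColS d j := by
    intro j
    unfold ColS
    rw [← Finset.sum_sub_distrib]
    exact Finset.sum_congr rfl fun i _ => hYc i j
  have hAalloc : IsAlloc c q A := by
    constructor
    · intro i
      have h1 : (∑ j, (A i j : ℤ)) ≤ (c i : ℤ) := by rw [hAr]; exact hra i
      rw [cast_row] at h1
      exact_mod_cast h1
    · intro j
      have h1 : (∑ i, (A i j : ℤ)) ≤ (q j : ℤ) := by rw [hAcol]; exact hca j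
      rw [cast_col] at h1
      exact_mod_cast h1
  have hYalloc : IsAlloc c q Y := by
    constructor
    · intro i
      have h1 : (∑ j, (Y i j : ℤ)) ≤ (c i : ℤ) := by rw [hYr]; exact hrM i
      rw [cast_row] at h1
      exact_mod_cast h1
    · intro j
      have h1 : (∑ i, (Y i j : ℤ)) ≤ (q j : ℤ) := by rw [hYcol]; exact hcM j
      rw [cast_col] at h1
      exact_mod_cast h1
  have hAz : ∀ j, A i₀ j = 0 := by
    intro j
    have h1 := hAc i₀ j
    rw [hB.2 j, haz j] at h1
    omega
  have hvA : allocVal w A = allocVal w a + ∑ i, ∑ j, (d i j : ℝ) * w i j := by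
    unfold allocVal
    rw [← Finset.sum_add_distrib]
    refine Finset.sum_congr rfl fun i _ => ?_
    rw [← Finset.sum_add_distrib]
    refine Finset.sum_congr rfl fun j _ => ?_
    have h1 : (A i j : ℝ) = (a i j : ℝ) + (d i j : ℝ) := by
      exact_mod_cast congrArg (fun z : ℤ => (z : ℝ)) (hAc i j)
    rw [h1]; ring
  have hvY : allocVal w Y = allocVal w M - ∑ i, ∑ j, (d i j : ℝ) * w i j := by
    unfold allocVal
    rw [← Finset.sum_sub_distrib]
    refine Finset.sum_congr rfl fun i _ => ?_
    rw [← Finset.sum_sub_distrib]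
    refine Finset.sum_congr rfl fun j _ => ?_
    have h1 : (Y i j : ℝ) = (M i j : ℝ) - (d i j : ℝ) := by
      exact_mod_cast congrArg (fun z : ℤ => (z : ℝ)) (hYc i j)
    rw [h1]; ring
  have h1 := haopt A hAalloc hAz
  have h2 := hMmax Y hYalloc
  have ht : allocVal w A = allocVal w a := by
    rw [hvA] at h1 ⊢
    rw [hvY] at h2
    have : ∑ i, ∑ j, (d i j : ℝ) * w i j = 0 := by linarith
    rw [this, add_zero]
  -- distance strictly decreases
  have hdne : ∃ i j, d i j ≠ 0 := by
    by_contra h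
    push_neg at h
    exact hd0 (funext fun i => funext fun j => h i j)
  obtain ⟨i1, j1, hne1⟩ := hdne
  have hle : ∀ i j, Nat.dist (A i j) (M i j) ≤ Nat.dist (a i j) (M i j) := by
    intro i j
    have h1 := hAc i j
    unfold Nat.dist
    rcases hB.1 i j with h | ⟨h, hlt⟩ | ⟨h, hlt⟩ <;> rw [h] at h1 <;> omega
  have hlt1 : Nat.dist (A i1 j1) (M i1 j1) < Nat.dist (a i1 j1) (M i1 j1) := by
    have h1 := hAc i1 j1
    unfold Nat.dist
    rcases hB.1 i1 j1 with h | ⟨h, hlt⟩ | ⟨h, hlt⟩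
    · exact absurd h hne1
    · rw [h] at h1; omega
    · rw [h] at h1; omega
  have hDlt : Dist M A < Dist M a := by
    unfold Dist
    refine Finset.sum_lt_sum (fun i _ => Finset.sum_le_sum fun j _ => hle i j)
      ⟨i1, Finset.mem_univ i1, ?_⟩
    exact Finset.sum_lt_sum (fun j _ => hle i1 j) ⟨j1, Finset.mem_univ j1, hlt1⟩
  have := hamin A hAalloc hAz ht
  omega


end ExcOpt

/-- For a welfare-maximizing allocation `M` there is an allocation `M₁`
maximizing welfare among those giving nothing to agent `i₀` such that the vertex
of agent `i₀` is the only possible source in the difference graph: every other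
agent receives at least as much in `M₁` as in `M`, and every good is used in
`M₁` at most as much as in `M`. -/
theorem exists_excluded_opt_unique_source {n m : ℕ}
    (c : Fin n → ℕ) (q : Fin m → ℕ) (w : Fin n → Fin m → ℝ)
    (hw : ∀ i j, 0 ≤ w i j) (i₀ : Fin n)
    (M : Fin n → Fin m → ℕ) (hM : IsAlloc c q M)
    (hMmax : ∀ a, IsAlloc c q a → allocVal w a ≤ allocVal w M) :
    ∃ M₁ : Fin n → Fin m → ℕ, IsAlloc c q M₁ ∧ (∀ j, M₁ i₀ j = 0) ∧
      (∀ a, IsAlloc c q a → (∀ j, a i₀ j = 0) → allocVal w a ≤ allocVal w M₁) ∧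
      (∀ i, i ≠ i₀ → ∑ j, M i j ≤ ∑ j, M₁ i j) ∧
      (∀ j, ∑ i, M₁ i j ≤ ∑ i, M i j) := by
  classical
  set S : Set (Fin n → Fin m → ℕ) := {x | IsAlloc c q x ∧ ∀ j, x i₀ j = 0} with hSdef
  have hSfin : S.Finite := by
    set C := Finset.univ.sup c with hC
    have hsub : S ⊆ Set.range
        (fun (g : Fin n → Fin m → Fin (C + 1)) => (fun i j => (g i j : ℕ))) := by
      intro x hx
      have hb : ∀ i j, x i j < C + 1 := by
        intro i j
        have h1 : x i j ≤ ∑ j', x i j' :=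
          Finset.single_le_sum (fun _ _ => Nat.zero_le _) (Finset.mem_univ j)
        have h2 := hx.1.1 i
        have h3 : c i ≤ C := Finset.le_sup (Finset.mem_univ i)
        omega
      exact ⟨fun i j => ⟨x i j, hb i j⟩, rfl⟩
    exact Set.Finite.subset (Set.finite_range _) hsub
  have hSne : S.Nonempty := by
    refine ⟨fun _ _ => 0, ⟨⟨fun i => ?_, fun j => ?_⟩, fun j => rfl⟩⟩ <;> simp
  obtain ⟨a0, ha0S, ha0max⟩ := Set.exists_max_image S (allocVal w) hSfin hSne
  set S' : Set (Fin n → Fin m → ℕ) := {x | x ∈ S ∧ allocVal w x = allocVal w a0} with hS'def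
  have hDSne : (ExcOpt.Dist M '' S').Nonempty := ⟨_, ⟨a0, ⟨ha0S, rfl⟩, rfl⟩⟩
  obtain ⟨a, haS', hadist⟩ := Nat.sInf_mem hDSne
  have hamin : ∀ x ∈ S', ExcOpt.Dist M a ≤ ExcOpt.Dist M x := by
    intro x hx
    rw [hadist]
    exact Nat.sInf_le ⟨x, hx, rfl⟩
  obtain ⟨⟨ha, haz⟩, haval⟩ := haS'
  have haopt : ∀ x, IsAlloc c q x → (∀ j, x i₀ j = 0) → allocVal w x ≤ allocVal w a := by
    intro x hx hxz
    rw [haval]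
    exact ha0max x ⟨hx, hxz⟩
  have hamin' : ∀ x, IsAlloc c q x → (∀ j, x i₀ j = 0) →
      allocVal w x = allocVal w a → ExcOpt.Dist M a ≤ ExcOpt.Dist M x := by
    intro x hx hxz hxv
    exact hamin x ⟨⟨hx, hxz⟩, by rw [hxv, haval]⟩
  have ha1 : ∀ i', (∑ j', (a i' j' : ℤ)) ≤ c i' := by
    intro i'; rw [ExcOpt.cast_row]; exact_mod_cast ha.1 i'
  have ha2 : ∀ j', (∑ i', (a i' j' : ℤ)) ≤ q j' := by
    intro j'; rw [ExcOpt.cast_col]; exact_mod_cast ha.2 j'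
  have hM1 : ∀ i', (∑ j', (M i' j' : ℤ)) ≤ c i' := by
    intro i'; rw [ExcOpt.cast_row]; exact_mod_cast hM.1 i'
  have hM2 : ∀ j', (∑ i', (M i' j' : ℤ)) ≤ q j' := by
    intro j'; rw [ExcOpt.cast_col]; exact_mod_cast hM.2 j'
  refine ⟨a, ha, haz, haopt, ?_, ?_⟩
  · -- every agent i ≠ i₀ keeps at least its M-row
    intro i hi
    by_contra hcon
    push_neg at hcon
    have hex : ∃ j, a i j < M i j := by
      obtain ⟨j, _, h⟩ := Finset.exists_lt_of_sum_lt hcon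
      exact ⟨j, h⟩
    have hout := ExcOpt.walk c q a M i₀ ha haz hM
      (Finset.univ \ (∅ : Finset (Fin n))).card ∅ ∅ i (le_refl _)
      (Finset.notMem_empty i) hi hex
    rcases hout with ⟨d, hF⟩ | ⟨d, hP⟩ | ⟨v, hv, -⟩ | ⟨u, hu, -⟩
    · exact ExcOpt.no_finp c q w a M i₀ hMmax haopt hamin' haz d hF
    · obtain ⟨hB, hri, hrow, hcol, hVz, hWz⟩ := hP
      have hconZ : (∑ j, (a i j : ℤ)) + 1 ≤ ∑ j, (M i j : ℤ) := by
        rw [ExcOpt.cast_row, ExcOpt.cast_row]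
        exact_mod_cast hcon
      refine ExcOpt.no_finp c q w a M i₀ hMmax haopt hamin' haz d
        ⟨hB, ?_, ?_, fun j => (hcol j).2, ?_, ?_⟩
      · intro h0
        rw [h0] at hri
        simp [ExcOpt.RowS] at hri
      · intro i'
        by_cases h : i' = i
        · subst h
          rw [hri]
          have := hM1 i'
          omega
        · have := (hrow i' h).1
          have := ha1 i'
          omega
      · intro i'
        by_cases h : i' = i
        · subst h
          rw [hri]
          have := hM1 i'
          omega
        · exact (hrow i' h).2
      · intro j
        have := (hcol j).1
        have := hM2 j
        omega
    · exact absurd hv (Finset.notMem_empty v)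
    · exact absurd hu (Finset.notMem_empty u)
  · -- every good is used at most as much as in M
    intro j
    by_contra hcon
    push_neg at hcon
    obtain ⟨i'', _, hlt''⟩ := Finset.exists_lt_of_sum_lt hcon
    have hi''0 : i'' ≠ i₀ := by
      intro h; rw [h] at hlt''; have := haz j; omega
    have hconZ : (∑ i', (M i' j : ℤ)) + 1 ≤ ∑ i', (a i' j : ℤ) := by
      rw [ExcOpt.cast_col, ExcOpt.cast_col]
      exact_mod_cast hcon
    by_cases hMr : ∑ j', M i'' j' < c i''
    · -- one unit can be returned directly
      have hMrZ : (∑ j', (M i'' j' : ℤ)) + 1 ≤ c i'' := by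
        rw [ExcOpt.cast_row]
        exact_mod_cast hMr
      refine ExcOpt.no_finp c q w a M i₀ hMmax haopt hamin' haz (ExcOpt.Sgl i'' j (-1))
        ⟨ExcOpt.Base.sgl hi''0 (Or.inr ⟨rfl, hlt''⟩), ?_, ?_, ?_, ?_, ?_⟩
      · intro h0
        have h1 : ExcOpt.Sgl i'' j (-1) i'' j = 0 := by rw [h0]; rfl
        rw [ExcOpt.sgl_apply, if_pos ⟨rfl, rfl⟩] at h1
        norm_num at h1
      · intro ii
        rw [ExcOpt.rowS_sgl]
        have := ha1 ii
        split_ifs <;> omega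
      · intro jj
        rw [ExcOpt.colS_sgl]
        have := ha2 jj
        split_ifs <;> omega
      · intro ii
        rw [ExcOpt.rowS_sgl]
        have := hM1 ii
        split_ifs with h
        · subst h; omega
        · omega
      · intro jj
        rw [ExcOpt.colS_sgl]
        have := hM2 jj
        split_ifs with h
        · subst h
          have := ha2 jj
          omega
        · omega
    · have hMre : c i'' ≤ ∑ j', M i'' j' := Nat.le_of_not_lt hMr
      have hex'' : ∃ j', a i'' j' < M i'' j' := by
        have h1 := Finset.sum_erase_add Finset.univ (fun j' => a i'' j') (Finset.mem_univ j)
        have h2 := Finset.sum_erase_add Finset.univ (fun j' => M i'' j') (Finset.mem_univ j)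
        have h3 : ∑ j', a i'' j' ≤ c i'' := ha.1 i''
        have hs : ∑ j' ∈ Finset.univ.erase j, a i'' j' <
            ∑ j' ∈ Finset.univ.erase j, M i'' j' := by
          omega
        obtain ⟨j', _, h⟩ := Finset.exists_lt_of_sum_lt hs
        exact ⟨j', h⟩
      have hout := ExcOpt.walk c q a M i₀ ha haz hM
        (Finset.univ \ (∅ : Finset (Fin n))).card ∅ {j} i'' (le_refl _)
        (Finset.notMem_empty i'') hi''0 hex''
      rcases hout with ⟨d, hF⟩ | ⟨d, hP⟩ | ⟨v, hv, -⟩ | ⟨u, hu, d, hCG⟩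
      · exact ExcOpt.no_finp c q w a M i₀ hMmax haopt hamin' haz d hF
      · -- pend: close with the initial minus edge
        obtain ⟨hB, hri, hrow, hcol, hVz, hWz⟩ := hP
        have hWj : ∀ i', d i' j = 0 := hWz j (Finset.mem_singleton_self j)
        have hdi''j : d i'' j = 0 := hWj i''
        have hcolj : ExcOpt.ColS d j = 0 := ExcOpt.colS_zero_of d j hWj
        have hBnew := hB.add_sgl hdi''j hi''0 (Or.inr ⟨rfl, hlt''⟩)
        refine ExcOpt.no_finp c q w a M i₀ hMmax haopt hamin' haz
          (d + ExcOpt.Sgl i'' j (-1)) ⟨hBnew, ?_, ?_, ?_, ?_, ?_⟩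
        · intro h0
          have h1 : (d + ExcOpt.Sgl i'' j (-1)) i'' j = 0 := by rw [h0]; rfl
          rw [ExcOpt.add_apply', ExcOpt.sgl_apply, if_pos ⟨rfl, rfl⟩, hdi''j] at h1
          norm_num at h1
        · intro ii
          rw [ExcOpt.rowS_add, ExcOpt.rowS_sgl]
          have := ha1 ii
          by_cases h : ii = i''
          · subst h; rw [if_pos rfl, hri]; omega
          · rw [if_neg h]
            have := (hrow ii h).1
            omega
        · intro jj
          rw [ExcOpt.colS_add, ExcOpt.colS_sgl]
          have := (hcol jj).2
          by_cases h : jj = j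
          · subst h; rw [if_pos rfl, hcolj]
            have := ha2 jj
            omega
          · rw [if_neg h]; omega
        · intro ii
          rw [ExcOpt.rowS_add, ExcOpt.rowS_sgl]
          have := hM1 ii
          by_cases h : ii = i''
          · subst h; rw [if_pos rfl, hri]; omega
          · rw [if_neg h]
            have := (hrow ii h).2
            omega
        · intro jj
          rw [ExcOpt.colS_add, ExcOpt.colS_sgl]
          have := hM2 jj
          by_cases h : jj = j
          · subst h; rw [if_pos rfl, hcolj]
            have := ha2 jj
            omega
          · rw [if_neg h]
            have := (hcol jj).1
            omega
      · exact absurd hv (Finset.notMem_empty v)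
      · -- cycle through the starting good j
        have huj : u = j := Finset.mem_singleton.mp hu
        subst huj
        obtain ⟨hB, hri, hrow, hcu, hcol, hVz, hWz, hnn⟩ := hCG
        have hdi''u : d i'' u = 0 := by
          rcases hB.1 i'' u with h | ⟨h, hlt⟩ | ⟨h, hlt⟩
          · exact h
          · omega
          · have := hnn i''; omega
        have hBnew := hB.add_sgl hdi''u hi''0 (Or.inr ⟨rfl, hlt''⟩)
        have hR : ∀ ii, ExcOpt.RowS (d + ExcOpt.Sgl i'' u (-1)) ii = 0 := by
          intro ii
          rw [ExcOpt.rowS_add, ExcOpt.rowS_sgl]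
          by_cases h : ii = i''
          · subst h; rw [if_pos rfl, hri]; ring
          · rw [if_neg h, hrow ii h]; ring
        have hC : ∀ jj, ExcOpt.ColS (d + ExcOpt.Sgl i'' u (-1)) jj = 0 := by
          intro jj
          rw [ExcOpt.colS_add, ExcOpt.colS_sgl]
          by_cases h : jj = u
          · subst h; rw [if_pos rfl, hcu]; ring
          · rw [if_neg h, hcol jj h]; ring
        have hne0 : ∃ is, d is u ≠ 0 := by
          by_contra hC'
          push_neg at hC'
          rw [ExcOpt.colS_zero_of d u hC'] at hcu
          norm_num at hcu
        obtain ⟨is, his⟩ := hne0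
        have hisne : is ≠ i'' := fun h => his (h ▸ hdi''u)
        refine ExcOpt.no_finp c q w a M i₀ hMmax haopt hamin' haz
          (d + ExcOpt.Sgl i'' u (-1)) ⟨hBnew, ?_, ?_, ?_, ?_, ?_⟩
        · intro h0
          apply his
          have heq : (d + ExcOpt.Sgl i'' u (-1)) is u = d is u := by
            rw [ExcOpt.add_apply', ExcOpt.sgl_apply, if_neg]
            · norm_num
            · rintro ⟨h, -⟩; exact hisne h
          rw [h0] at heq
          exact heq.symm
        · intro ii; rw [hR]; have := ha1 ii; omega
        · intro jj; rw [hC]; have := ha2 jj; omega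
        · intro ii; rw [hR]; have := hM1 ii; omega
        · intro jj; rw [hC]; have := hM2 jj; omega
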